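/- For A ∼ N(0, I_n) standard Gaussian in ℝⁿ and any x, x* ∈ ℝⁿ, the expectation of the phase-retrieval gradient satisfies E[((A^T x)² − (A^T x*)²)(A^T x) A] = (3‖x‖₂² − ‖x*‖₂²) x − 2 (x^T x*) x*. -/

import Mathlib

open Finset MeasureTheory ProbabilityTheory

open Real

open scoped NNReal ENNReal

/-! ### Auxiliary lemmas: integrals against the standard Gaussian -/

lemma integral_gaussianReal_eq (g : ℝ → ℝ) :
    ∫ t, g t ∂(gaussianReal 0 1) = ∫ t, gaussianPDFReal 0 1 t * g t := by
  rw [gaussianReal_of_var_ne_zero 0 one_ne_zero]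
  have : (gaussianPDF 0 1) = fun x => ((Real.toNNReal (gaussianPDFReal 0 1 x) : ℝ≥0) : ℝ≥0∞) := rfl
  rw [this, integral_withDensity_eq_integral_smul
    ((measurable_gaussianPDFReal 0 1).real_toNNReal) g]
  congr 1; funext t
  rw [NNReal.smul_def, smul_eq_mul, Real.coe_toNNReal _ (gaussianPDFReal_nonneg 0 1 t)]

lemma integrable_gaussianReal_iff (g : ℝ → ℝ) :
    Integrable g (gaussianReal 0 1) ↔ Integrable (fun t => gaussianPDFReal 0 1 t * g t) := by
  rw [gaussianReal_of_var_ne_zero 0 one_ne_zero]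
  have : (gaussianPDF 0 1) = fun x => ((Real.toNNReal (gaussianPDFReal 0 1 x) : ℝ≥0) : ℝ≥0∞) := rfl
  rw [this, integrable_withDensity_iff_integrable_smul
    ((measurable_gaussianPDFReal 0 1).real_toNNReal)]
  constructor <;> intro h <;> refine h.congr (Filter.Eventually.of_forall fun t => ?_) <;>
    simp only [NNReal.smul_def, smul_eq_mul, Real.coe_toNNReal _ (gaussianPDFReal_nonneg 0 1 t)]

lemma integrable_pow_mul_gauss (k : ℕ) :
    Integrable (fun t : ℝ => t ^ k * rexp (-(1/2) * t ^ 2)) := by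
  have := integrable_rpow_mul_exp_neg_mul_sq (b := 1/2) (by norm_num) (s := (k : ℝ))
    (by exact_mod_cast neg_one_lt_zero.trans_le (Nat.cast_nonneg k) : (-1:ℝ) < (k:ℝ))
  simpa [Real.rpow_natCast] using this

lemma gauss_rec (k : ℕ) :
    ∫ t : ℝ, t ^ (k + 2) * rexp (-(1/2) * t ^ 2)
      = (k + 1) * ∫ t : ℝ, t ^ k * rexp (-(1/2) * t ^ 2) := by
  have hderiv : ∀ t : ℝ, HasDerivAt (fun t : ℝ => t ^ (k+1) * rexp (-(1/2) * t ^ 2))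
      ((k+1) * t ^ k * rexp (-(1/2) * t ^ 2) - t ^ (k+2) * rexp (-(1/2) * t ^ 2)) t := by
    intro t
    have h1 : HasDerivAt (fun t : ℝ => t ^ (k+1)) ((k+1) * t ^ k) t := by
      simpa using hasDerivAt_pow (k+1) t
    have h2 : HasDerivAt (fun t : ℝ => rexp (-(1/2) * t ^ 2))
        (-t * rexp (-(1/2) * t ^ 2)) t := by
      have := ((hasDerivAt_pow 2 t).const_mul (-(1/2) : ℝ)).exp
      convert this using 1
      ring
    have := h1.fun_mul h2
    exact this.congr_deriv (by ring)
  have hint : Integrable (fun t : ℝ =>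
      (k+1) * t ^ k * rexp (-(1/2) * t ^ 2) - t ^ (k+2) * rexp (-(1/2) * t ^ 2)) := by
    have h1 := (integrable_pow_mul_gauss k).const_mul ((k : ℝ)+1)
    have h2 := integrable_pow_mul_gauss (k+2)
    simpa [mul_assoc, Pi.sub_def] using h1.sub h2
  have hzero := integral_eq_zero_of_hasDerivAt_of_integrable hderiv hint
    (by simpa [mul_comm] using integrable_pow_mul_gauss (k+1))
  rw [integral_sub (by simpa [mul_assoc] using (integrable_pow_mul_gauss k).const_mul ((k:ℝ)+1))
    (integrable_pow_mul_gauss (k+2))] at hzero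
  have := sub_eq_zero.mp hzero
  rw [← this]
  rw [← integral_const_mul]
  congr 1; funext t; ring

lemma gauss_I0 : ∫ t : ℝ, rexp (-(1/2) * t ^ 2) = √(2 * π) := by
  have := integral_gaussian (1/2)
  rw [show √(π / (1/2)) = √(2*π) by rw [div_div_eq_mul_div, div_one, mul_comm]] at this
  simpa using this

lemma gauss_I1 : ∫ t : ℝ, t ^ 1 * rexp (-(1/2) * t ^ 2) = 0 := by
  have hderiv : ∀ t : ℝ, HasDerivAt (fun t : ℝ => -rexp (-(1/2) * t ^ 2))
      (t ^ 1 * rexp (-(1/2) * t ^ 2)) t := by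
    intro t
    have := (((hasDerivAt_pow 2 t).const_mul (-(1/2) : ℝ)).exp).fun_neg
    exact this.congr_deriv (by ring)
  exact integral_eq_zero_of_hasDerivAt_of_integrable hderiv (integrable_pow_mul_gauss 1)
    ((integrable_exp_neg_mul_sq (by norm_num : (0:ℝ) < 1/2)).neg)

lemma gauss_I2 : ∫ t : ℝ, t ^ 2 * rexp (-(1/2) * t ^ 2) = √(2 * π) := by
  have := gauss_rec 0
  simp only [pow_zero, one_mul] at this
  rw [this, gauss_I0]
  norm_num

lemma gauss_I3 : ∫ t : ℝ, t ^ 3 * rexp (-(1/2) * t ^ 2) = 0 := by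
  have := gauss_rec 1
  rw [this, gauss_I1, mul_zero]

lemma gauss_I4 : ∫ t : ℝ, t ^ 4 * rexp (-(1/2) * t ^ 2) = 3 * √(2 * π) := by
  have := gauss_rec 2
  rw [this, gauss_I2]
  norm_num

lemma pdf_mul_eq (g : ℝ → ℝ) (t : ℝ) :
    gaussianPDFReal 0 1 t * g t = (√(2*π))⁻¹ * (g t * rexp (-(1/2) * t ^ 2)) := by
  simp only [gaussianPDFReal]
  norm_num
  ring_nf

lemma gmoment (k : ℕ) :
    ∫ t, t ^ k ∂(gaussianReal 0 1)
      = (√(2*π))⁻¹ * ∫ t : ℝ, t ^ k * rexp (-(1/2) * t ^ 2) := by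
  rw [integral_gaussianReal_eq,
    show (fun t => gaussianPDFReal 0 1 t * t ^ k)
      = fun t : ℝ => (√(2*π))⁻¹ * (t ^ k * rexp (-(1/2) * t ^ 2)) from
      funext fun t => pdf_mul_eq (fun t => t ^ k) t,
    integral_const_mul]

lemma sqrt2pi_ne : √(2*π) ≠ 0 := by positivity

lemma gmoment0 : ∫ t, t ^ 0 ∂(gaussianReal 0 1) = 1 := by
  rw [gmoment]; simp only [pow_zero, one_mul, gauss_I0]
  exact inv_mul_cancel₀ sqrt2pi_ne
lemma gmoment1 : ∫ t, t ^ 1 ∂(gaussianReal 0 1) = 0 := by rw [gmoment, gauss_I1, mul_zero]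
lemma gmoment2 : ∫ t, t ^ 2 ∂(gaussianReal 0 1) = 1 := by
  rw [gmoment, gauss_I2]; exact inv_mul_cancel₀ sqrt2pi_ne
lemma gmoment3 : ∫ t, t ^ 3 ∂(gaussianReal 0 1) = 0 := by rw [gmoment, gauss_I3, mul_zero]
lemma gmoment4 : ∫ t, t ^ 4 ∂(gaussianReal 0 1) = 3 := by
  rw [gmoment, gauss_I4]
  field_simp

lemma integrable_pow_gaussianReal (k : ℕ) :
    Integrable (fun t : ℝ => t ^ k) (gaussianReal 0 1) := by
  rw [integrable_gaussianReal_iff]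
  refine ((integrable_pow_mul_gauss k).const_mul ((√(2*π))⁻¹)).congr
    (Filter.Eventually.of_forall fun t => ?_)
  exact (pdf_mul_eq (fun t => t ^ k) t).symm

/-! ### Product structure over the Gaussian product measure -/

section pi
variable {n : ℕ}

lemma pi_integral_prod (f : Fin n → ℝ → ℝ) :
    ∫ a : Fin n → ℝ, ∏ m, f m (a m) ∂(Measure.pi fun _ => gaussianReal 0 1)
      = ∏ m, ∫ t, f m t ∂(gaussianReal 0 1) := by
  letI : MeasureSpace ℝ := ⟨gaussianReal 0 1⟩
  haveI : SigmaFinite (volume : Measure ℝ) :=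
    (inferInstance : SigmaFinite (gaussianReal 0 1))
  exact MeasureTheory.integral_fintype_prod_eq_prod f

lemma pi_integrable_prod (f : Fin n → ℝ → ℝ)
    (hf : ∀ m, Integrable (f m) (gaussianReal 0 1)) :
    Integrable (fun a : Fin n → ℝ => ∏ m, f m (a m))
      (Measure.pi fun _ => gaussianReal 0 1) := by
  letI : MeasureSpace ℝ := ⟨gaussianReal 0 1⟩
  haveI : SigmaFinite (volume : Measure ℝ) :=
    (inferInstance : SigmaFinite (gaussianReal 0 1))
  exact MeasureTheory.Integrable.fintype_prod hf

/-- multiplicity count of the index `m` in the quadruple `(i, k, l, j)` -/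
def cnt (i k l j m : Fin n) : ℕ :=
  (if i = m then 1 else 0) + (if k = m then 1 else 0)
    + (if l = m then 1 else 0) + (if j = m then 1 else 0)

lemma prod_form (i k l j : Fin n) (a : Fin n → ℝ) :
    a i * a k * a l * a j = ∏ m, a m ^ cnt i k l j m := by
  simp only [cnt, pow_add, Finset.prod_mul_distrib]
  have h : ∀ q : Fin n, (∏ m, a m ^ (if q = m then 1 else 0)) = a q := by
    intro q
    rw [show (fun m => a m ^ (if q = m then 1 else 0))
        = fun m => (if q = m then a m else 1) from
      funext fun m => by split <;> simp]
    simp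
  rw [h i, h k, h l, h j]

lemma integral_monomial (i k l j : Fin n) :
    ∫ a : Fin n → ℝ, a i * a k * a l * a j ∂(Measure.pi fun _ => gaussianReal 0 1)
      = ∏ m, ∫ t, t ^ cnt i k l j m ∂(gaussianReal 0 1) := by
  rw [show (fun a : Fin n → ℝ => a i * a k * a l * a j)
      = fun a => ∏ m, (a m) ^ cnt i k l j m from funext fun a => prod_form i k l j a]
  exact pi_integral_prod _

lemma integrable_monomial (i k l j : Fin n) :
    Integrable (fun a : Fin n → ℝ => a i * a k * a l * a j)
      (Measure.pi fun _ => gaussianReal 0 1) := by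
  rw [show (fun a : Fin n → ℝ => a i * a k * a l * a j)
      = fun a => ∏ m, (a m) ^ cnt i k l j m from funext fun a => prod_form i k l j a]
  exact pi_integrable_prod _ fun m => integrable_pow_gaussianReal _

/-! ### Wick's formula for fourth-order monomials -/

lemma wick (i k l j : Fin n) :
    ∏ m, ∫ t, t ^ cnt i k l j m ∂(gaussianReal 0 1)
      = (if i = k then (1:ℝ) else 0) * (if l = j then 1 else 0)
        + (if i = l then 1 else 0) * (if k = j then 1 else 0)
        + (if i = j then 1 else 0) * (if k = l then 1 else 0) := by
  have zero1 : ∀ p : Fin n, cnt i k l j p = 1 →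
      (∏ m, ∫ t, t ^ cnt i k l j m ∂(gaussianReal 0 1)) = 0 := fun p hp =>
    Finset.prod_eq_zero (mem_univ p) (by rw [hp, gmoment1])
  have zero3 : ∀ p : Fin n, cnt i k l j p = 3 →
      (∏ m, ∫ t, t ^ cnt i k l j m ∂(gaussianReal 0 1)) = 0 := fun p hp =>
    Finset.prod_eq_zero (mem_univ p) (by rw [hp, gmoment3])
  have even2 : ∀ p q : Fin n, p ≠ q →
      (∀ m, cnt i k l j m = (if p = m then 1 else 0) * 2 + (if q = m then 1 else 0) * 2) →
      (∏ m, ∫ t, t ^ cnt i k l j m ∂(gaussianReal 0 1)) = 1 := by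
    intro p q hpq hc
    refine Finset.prod_eq_one fun m _ => ?_
    rw [hc m]
    by_cases h1 : p = m
    · subst h1
      simp only [if_pos rfl, if_neg (fun h => hpq (h.symm ▸ rfl) : ¬ q = p)]
      norm_num [gmoment2]
    · by_cases h2 : q = m
      · subst h2
        simp only [if_neg h1, if_pos rfl]
        norm_num [gmoment2]
      · simp only [if_neg h1, if_neg h2]
        norm_num [gmoment0]
  rcases eq_or_ne i k with rfl | hik
  · rcases eq_or_ne l j with rfl | hlj
    · rcases eq_or_ne i l with rfl | hil
      · -- all four equal
        have hval : ∀ m, (∫ t, t ^ cnt i i i i m ∂(gaussianReal 0 1))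
            = if i = m then 3 else 1 := by
          intro m
          by_cases h : i = m
          · subst h; simp only [cnt, if_pos rfl]; norm_num [gmoment4]
          · simp only [cnt, if_neg h]; norm_num [gmoment0]
        rw [Finset.prod_congr rfl fun m _ => hval m, Finset.prod_ite_eq]
        norm_num
      · -- i = k, l = j, i ≠ l
        rw [even2 i l hil fun m => by simp only [cnt]; split <;> split <;> omega]
        simp [hil, Ne.symm hil]
    · -- i = k, l ≠ j
      rcases eq_or_ne i l with rfl | hil
      · -- i = k = l ≠ j
        rw [zero3 i (by simp [cnt, Ne.symm hlj])]
        simp [hlj, Ne.symm hlj]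
      · by_cases hij : i = j
        · subst hij
          rw [zero3 i (by simp [cnt, hil, Ne.symm hil, hlj, Ne.symm hlj])]
          simp [hlj, hil, Ne.symm hil, Ne.symm hlj]
        · rw [zero1 l (by simp [cnt, hil, Ne.symm hil, hlj, Ne.symm hlj, hij])]
          simp [hlj, hil, hij, Ne.symm hil, Ne.symm hlj, Ne.symm hij]
  · -- i ≠ k
    rcases eq_or_ne i l with rfl | hil
    · rcases eq_or_ne k j with rfl | hkj
      · -- i = l, k = j, i ≠ k
        rw [even2 i k hik fun m => by simp only [cnt]; split <;> split <;> omega]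
        simp [hik, Ne.symm hik]
      · -- i = l, k ≠ j
        by_cases hij : i = j
        · subst hij
          rw [zero3 i (by simp [cnt, hik, Ne.symm hik, hkj, Ne.symm hkj])]
          simp [hik, hkj, Ne.symm hik, Ne.symm hkj]
        · rw [zero1 j (by simp [cnt, hij, Ne.symm hij, hkj, Ne.symm hkj])]
          simp [hik, hkj, hij, Ne.symm hik, Ne.symm hkj, Ne.symm hij]
    · rcases eq_or_ne i j with rfl | hij
      · rcases eq_or_ne k l with rfl | hkl
        · -- i = j, k = l, i ≠ k
          rw [even2 i k hik fun m => by simp only [cnt]; split <;> split <;> omega]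
          simp [hik, hil, Ne.symm hik, Ne.symm hil]
        · rw [zero1 l (by simp [cnt, hil, Ne.symm hil, hkl, Ne.symm hkl])]
          simp [hik, hil, hkl, Ne.symm hik, Ne.symm hil, Ne.symm hkl]
      · rw [zero1 i (by simp [cnt, hik, Ne.symm hik, hil, Ne.symm hil, hij, Ne.symm hij])]
        simp [hik, hil, hij]

end pi

/-! ### The combinatorial summation -/

lemma sum_ite_const {α : Type*} [Fintype α] (c : Prop) [Decidable c] (f : α → ℝ) :
    ∑ a, (if c then f a else 0) = if c then ∑ a, f a else 0 := by
  split <;> simp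

lemma final_sum {n : ℕ} (x xs : Fin n → ℝ) (j : Fin n) :
    ∑ i, ∑ k, ∑ l, ((x l * x k - xs l * xs k) * x i) *
        ((if l = k then (1:ℝ) else 0) * (if i = j then 1 else 0)
          + (if l = i then 1 else 0) * (if k = j then 1 else 0)
          + (if l = j then 1 else 0) * (if k = i then 1 else 0))
      = (3 * ∑ i, (x i)^2 - ∑ i, (xs i)^2) * x j - 2 * (∑ i, x i * xs i) * xs j := by
  simp only [mul_add, ite_mul, mul_ite, mul_zero, mul_one, zero_mul, one_mul,
    Finset.sum_add_distrib, sum_ite_const, Finset.sum_ite_eq, Finset.sum_ite_eq',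
    mem_univ, if_true]
  simp only [Finset.sum_sub_distrib, Finset.sum_mul, Finset.mul_sum, sub_mul, mul_sub, sq]
  simp only [← Finset.sum_sub_distrib, ← Finset.sum_add_distrib, ← Finset.sum_neg_distrib,
    sub_eq_add_neg]
  exact Finset.sum_congr rfl fun i _ => by ring

/-- The population gradient of the phase retrieval empirical risk under a
standard Gaussian measurement vector. -/
theorem phase_retrieval_population_gradient (n : ℕ) (x xs : Fin n → ℝ) (j : Fin n) :
    ∫ a : Fin n → ℝ,
        (((∑ i, a i * x i) ^ 2 - (∑ i, a i * xs i) ^ 2) * (∑ i, a i * x i) * a j)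
        ∂(Measure.pi fun _ : Fin n => gaussianReal 0 1) =
      (3 * ∑ i, (x i) ^ 2 - ∑ i, (xs i) ^ 2) * x j
        - 2 * (∑ i, x i * xs i) * xs j := by
  have expand : ∀ a : Fin n → ℝ,
      ((∑ i, a i * x i) ^ 2 - (∑ i, a i * xs i) ^ 2) * (∑ i, a i * x i) * a j
        = ∑ i, ∑ k, ∑ l, ((x l * x k - xs l * xs k) * x i) * (a l * a k * a i * a j) := by
    intro a
    simp only [sq, Finset.sum_mul_sum, sub_mul, Finset.sum_mul, Finset.mul_sum,
      ← Finset.sum_sub_distrib]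
    refine Finset.sum_congr rfl fun i _ => Finset.sum_congr rfl fun k _ =>
      Finset.sum_congr rfl fun l _ => by ring
  rw [show (fun a : Fin n → ℝ =>
      ((∑ i, a i * x i) ^ 2 - (∑ i, a i * xs i) ^ 2) * (∑ i, a i * x i) * a j)
      = fun a => ∑ i, ∑ k, ∑ l, ((x l * x k - xs l * xs k) * x i) * (a l * a k * a i * a j)
    from funext expand]
  rw [integral_finset_sum _ fun i _ => integrable_finset_sum _ fun k _ =>
    integrable_finset_sum _ fun l _ => (integrable_monomial l k i j).const_mul _]
  rw [← final_sum x xs j]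
  refine Finset.sum_congr rfl fun i _ => ?_
  rw [integral_finset_sum _ fun k _ => integrable_finset_sum _ fun l _ =>
    (integrable_monomial l k i j).const_mul _]
  refine Finset.sum_congr rfl fun k _ => ?_
  rw [integral_finset_sum _ fun l _ => (integrable_monomial l k i j).const_mul _]
  refine Finset.sum_congr rfl fun l _ => ?_
  rw [integral_const_mul, integral_monomial l k i j, wick l k i j]
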